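/- Let e_1, …, e_s ∈ ℤ_p be p-adic integers, each of which is neither a positive integer nor a p-adic Liouville number, and let m_1, …, m_s be positive natural numbers. Set φ(X) = ∏_i (X − e_i)^{m_i}. Then φ(j) ≠ 0 for every positive integer j, and for every real η with 0 < η < 1 the sequence η^j / |φ(j)|_p tends to 0 as j → ∞. -/
import Mathlib


open Filter

/-- A `p`-adic integer `α` is a `p`-adic Liouville number if
`liminf ‖n - α‖^(1/n) < 1` or `liminf ‖n + α‖^(1/n) < 1`. -/
def IsPadicLiouville (p : ℕ) [Fact p.Prime] (α : ℤ_[p]) : Prop :=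
  liminf (fun n : ℕ => ‖(n : ℤ_[p]) - α‖ ^ ((1 : ℝ) / n)) atTop < 1 ∨
  liminf (fun n : ℕ => ‖(n : ℤ_[p]) + α‖ ^ ((1 : ℝ) / n)) atTop < 1

lemma scalar_tendsto (p : ℕ) [Fact p.Prime] (α : ℤ_[p])
    (hL : ¬ IsPadicLiouville p α) {η : ℝ} (h0 : 0 < η) (h1 : η < 1) :
    Tendsto (fun n : ℕ => η ^ n / ‖(n : ℤ_[p]) - α‖) atTop (nhds 0) := by
  have hlim : (1 : ℝ) ≤ liminf (fun n : ℕ => ‖(n : ℤ_[p]) - α‖ ^ ((1 : ℝ) / n)) atTop := by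
    by_contra h
    exact hL (Or.inl (lt_of_not_ge h))
  set c : ℝ := (1 + η) / 2 with hc
  have hηc : η < c := by rw [hc]; linarith
  have hc1 : c < 1 := by rw [hc]; linarith
  have hc0 : 0 < c := by rw [hc]; linarith
  have hbdd : IsBoundedUnder (· ≥ ·) atTop
      (fun n : ℕ => ‖(n : ℤ_[p]) - α‖ ^ ((1 : ℝ) / n)) :=
    ⟨0, Filter.eventually_map.mpr (Filter.Eventually.of_forall fun n =>
      Real.rpow_nonneg (norm_nonneg _) _)⟩
  have hev : ∀ᶠ n : ℕ in atTop, c < ‖(n : ℤ_[p]) - α‖ ^ ((1 : ℝ) / n) :=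
    eventually_lt_of_lt_liminf (lt_of_lt_of_le hc1 hlim) hbdd
  have key : ∀ᶠ n : ℕ in atTop, c ^ n < ‖(n : ℤ_[p]) - α‖ := by
    filter_upwards [hev, eventually_ge_atTop 1] with n hn hn1
    have hx : (0:ℝ) ≤ ‖(n : ℤ_[p]) - α‖ := norm_nonneg _
    have hne : (n : ℝ) ≠ 0 := Nat.cast_ne_zero.mpr (by omega)
    calc c ^ n < (‖(n : ℤ_[p]) - α‖ ^ ((1 : ℝ) / n)) ^ n :=
          pow_lt_pow_left₀ hn hc0.le (by omega)
      _ = ‖(n : ℤ_[p]) - α‖ := by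
          rw [← Real.rpow_natCast (‖(n : ℤ_[p]) - α‖ ^ ((1 : ℝ) / n)) n,
            ← Real.rpow_mul hx, one_div, inv_mul_cancel₀ hne, Real.rpow_one]
  have hge : ∀ᶠ n : ℕ in atTop, η ^ n / ‖(n : ℤ_[p]) - α‖ ≤ (η / c) ^ n := by
    filter_upwards [key] with n hn
    have hx0 : (0:ℝ) < ‖(n : ℤ_[p]) - α‖ := lt_trans (by positivity) hn
    rw [div_pow]
    exact div_le_div_of_nonneg_left (by positivity) (by positivity) hn.le
  have hnn : ∀ᶠ n : ℕ in atTop, 0 ≤ η ^ n / ‖(n : ℤ_[p]) - α‖ :=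
    Filter.Eventually.of_forall fun n => by positivity
  have htend : Tendsto (fun n : ℕ => (η / c) ^ n) atTop (nhds 0) :=
    tendsto_pow_atTop_nhds_zero_of_lt_one (by positivity)
      (by rw [div_lt_one hc0]; exact hηc)
  exact squeeze_zero' hnn hge htend

/-- If each `e i` is neither a positive integer nor a `p`-adic Liouville number, then
`φ(j) = ∏ (j - e i)^(m i)` is nonzero for positive `j` and `η^j / ‖φ(j)‖ → 0` for
`0 < η < 1`. -/
theorem tendsto_pow_div_norm_charpoly_eval (p : ℕ) [Fact p.Prime] {s : ℕ}
    (e : Fin s → ℤ_[p]) (m : Fin s → ℕ) (hm : ∀ i, 0 < m i)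
    (hpos : ∀ i, ∀ k : ℕ, 0 < k → (k : ℤ_[p]) ≠ e i)
    (hL : ∀ i, ¬ IsPadicLiouville p (e i)) :
    (∀ j : ℕ, 0 < j → (∏ i, ((j : ℤ_[p]) - e i) ^ m i) ≠ 0) ∧
      ∀ η : ℝ, 0 < η → η < 1 →
        Tendsto (fun j : ℕ => η ^ j / ‖∏ i, ((j : ℤ_[p]) - e i) ^ m i‖)
          atTop (nhds 0) := by
  constructor
  · intro j hj
    exact Finset.prod_ne_zero_iff.mpr fun i _ =>
      pow_ne_zero _ (sub_ne_zero.mpr fun h => hpos i j hj h)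
  · intro η hη0 hη1
    rcases Nat.eq_zero_or_pos s with hs | hs
    · subst hs
      simpa using tendsto_pow_atTop_nhds_zero_of_lt_one hη0.le hη1
    · have hne : Nonempty (Fin s) := Fin.pos_iff_nonempty.mp hs
      set M : ℕ := ∑ i, m i with hM
      have hM0 : 0 < M := Finset.sum_pos (fun i _ => hm i) Finset.univ_nonempty
      have hMne : (M : ℝ) ≠ 0 := Nat.cast_ne_zero.mpr hM0.ne'
      set η' : ℝ := η ^ ((1:ℝ) / M) with hη'
      have hη'0 : 0 < η' := Real.rpow_pos_of_pos hη0 _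
      have hη'1 : η' < 1 := Real.rpow_lt_one hη0.le hη1 (by positivity)
      have hη'M : η' ^ M = η := by
        rw [hη', ← Real.rpow_natCast (η ^ ((1:ℝ)/M)) M, ← Real.rpow_mul hη0.le,
          one_div, inv_mul_cancel₀ hMne, Real.rpow_one]
      have hnorm : ∀ j : ℕ, ‖∏ i, ((j : ℤ_[p]) - e i) ^ m i‖
          = ∏ i, ‖(j : ℤ_[p]) - e i‖ ^ m i := by
        intro j
        rw [PadicInt.norm_def,
          show ((∏ i, ((j : ℤ_[p]) - e i) ^ m i : ℤ_[p]) : ℚ_[p])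
            = ∏ i, (((j : ℤ_[p]) - e i : ℤ_[p]) : ℚ_[p]) ^ m i from
            (map_prod (PadicInt.Coe.ringHom (p := p)) _ Finset.univ).trans (by simp [PadicInt.coe_pow]; rfl),
          norm_prod]
        simp [PadicInt.norm_def]
      have heq : ∀ j : ℕ,
          η ^ j / ‖∏ i, ((j : ℤ_[p]) - e i) ^ m i‖
            = ∏ i, (η' ^ j / ‖(j : ℤ_[p]) - e i‖) ^ m i := by
        intro j
        rw [hnorm j, Finset.prod_congr rfl
          (fun i _ => div_pow (η' ^ j) ‖(j : ℤ_[p]) - e i‖ (m i)),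
          Finset.prod_div_distrib]
        congr 1
        rw [Finset.prod_pow_eq_pow_sum, ← hM, ← pow_mul, mul_comm j M, pow_mul, hη'M]
      have hprod : Tendsto (fun j : ℕ => ∏ i, (η' ^ j / ‖(j : ℤ_[p]) - e i‖) ^ m i)
          atTop (nhds 0) := by
        have h0 : (0:ℝ) = ∏ _i : Fin s, (0:ℝ) := by
          simp [Finset.prod_const, hs.ne']
        rw [h0]
        refine tendsto_finset_prod _ fun i _ => ?_
        have := (scalar_tendsto p (e i) (hL i) hη'0 hη'1).pow (m i)
        rwa [zero_pow (hm i).ne'] at this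
      exact hprod.congr (fun j => (heq j).symm)
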